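/- Quadratic coercivity of the L1 operator: for real numbers v_0, v_1, ..., v_n and positive strictly decreasing weights a_0 ≥ a_1 ≥ ... ≥ a_{n-1} > 0, one has ∑_{k=1}^{n} a_{n-k}(v_k - v_{k-1}) v_n ≥ (1/2) ∑_{k=1}^{n} a_{n-k}(v_k^2 - v_{k-1}^2). -/

import Mathlib

lemma l1_coercivity_aux (b w : ℕ → ℝ) (hw : ∀ k, 0 ≤ w k) :
    ∀ n, 1 ≤ n → (∀ k, 1 ≤ k → k ≤ n → 0 ≤ b k) →
      (∀ k, 1 ≤ k → k < n → b k ≤ b (k + 1)) →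
      0 ≤ ∑ k ∈ Finset.Icc 1 n, b k * (w (k - 1) - w k) + b n * w n := by
  intro n hn
  induction n, hn using Nat.le_induction with
  | base =>
    intro hb _
    simp only [Finset.Icc_self, Finset.sum_singleton]
    nlinarith [mul_nonneg (hb 1 le_rfl le_rfl) (hw 0)]
  | succ n hn ih =>
    intro hb hmono
    have h1 := ih (fun k hk hk' => hb k hk (hk'.trans (Nat.le_succ n)))
      (fun k hk hk' => hmono k hk (hk'.trans (Nat.lt_succ_self n)))
    rw [Finset.sum_Icc_succ_top (by omega : 1 ≤ n + 1)]
    simp only [Nat.add_sub_cancel]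
    nlinarith [hmono n hn (Nat.lt_succ_self n), hw n, h1]

/-- Quadratic coercivity of the L1 operator: for real numbers v_0,...,v_n and
positive decreasing weights a_0 ≥ a_1 ≥ ... ≥ a_{n-1} > 0,
∑_{k=1}^n a_{n-k}(v_k - v_{k-1}) v_n ≥ (1/2) ∑_{k=1}^n a_{n-k}(v_k² - v_{k-1}²). -/
theorem l1_quadratic_coercivity (n : ℕ) (v a : ℕ → ℝ)
    (hpos : ∀ k < n, 0 < a k)
    (hdec : ∀ j k, j ≤ k → k < n → a k ≤ a j) :
    ∑ k ∈ Finset.Icc 1 n, a (n - k) * (v k - v (k - 1)) * v n ≥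
      (1 / 2) * ∑ k ∈ Finset.Icc 1 n, a (n - k) * ((v k) ^ 2 - (v (k - 1)) ^ 2) := by
  rcases Nat.eq_zero_or_pos n with h0 | hn
  · subst h0; simp
  set w : ℕ → ℝ := fun k => (v n - v k) ^ 2 with hwdef
  have hwn : w n = 0 := by simp [hwdef]
  have haux : 0 ≤ ∑ k ∈ Finset.Icc 1 n, a (n - k) * (w (k - 1) - w k) + a (n - n) * w n :=
    l1_coercivity_aux (fun k => a (n - k)) w (fun k => sq_nonneg _) n hn
      (fun k hk hk' => (hpos (n - k) (by omega)).le)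
      (fun k hk hk' => hdec (n - (k + 1)) (n - k) (by omega) (by omega))
  rw [ge_iff_le, ← sub_nonneg]
  have key : (∑ k ∈ Finset.Icc 1 n, a (n - k) * (v k - v (k - 1)) * v n) -
      (1 / 2) * ∑ k ∈ Finset.Icc 1 n, a (n - k) * ((v k) ^ 2 - (v (k - 1)) ^ 2) =
      (1 / 2) * ∑ k ∈ Finset.Icc 1 n, a (n - k) * (w (k - 1) - w k) := by
    rw [Finset.mul_sum, Finset.mul_sum, ← Finset.sum_sub_distrib]
    exact Finset.sum_congr rfl fun k hk => by simp only [hwdef]; ring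
  rw [key]
  rw [hwn] at haux
  linarith
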